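/- arXiv:2006.14113 — 3 statements merged into one kernel-verified Lean document; each statement's English description precedes it below -/
import Mathlib

section
/- Let G be a factor tree and suppose nonnegative numbers c_j (j∈V) and positive numbers c_α (α∈F) satisfy ∑_{j∈V} c_j + ∑_{α∈F} c_α = 1. For each edge (j,α), define c_{jα} as the sum of all c-values over the component of G − {(j,α)} containing j. Then all c_{jα} ≥ 0 and the equations c_j − ∑_{α∈N(j)} c_{jα} = 1 − N_j for all j ∈ V and c_α + ∑_{i∈N(α)} c_{iα} = 1 for all α ∈ F are satisfied. -/
open SimpleGraph Finset

section Aux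

variable {W : Type*} {G : SimpleGraph W}

private lemma aux_bridge (hA : G.IsAcyclic) {x y : W} (h : G.Adj x y) :
    ¬ (G.deleteEdges {s(x, y)}).Reachable x y :=
  (isBridge_iff.mp (isAcyclic_iff_forall_adj_isBridge.mp hA h))

/-- transfer a walk avoiding vertex `x` into the graph with edge `s(x,y)` deleted. -/
private lemma aux_transfer {x y u v : W} (p : G.Walk u v) (hx : x ∉ p.support) :
    (G.deleteEdges {s(x, y)}).Reachable u v := by
  refine ⟨p.transfer _ fun e he => ?_⟩
  rw [SimpleGraph.edgeSet_deleteEdges]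
  refine ⟨p.edges_subset_edgeSet he, ?_⟩
  rintro rfl
  exact hx (p.fst_mem_support_of_mem_edges he)

/-- from reachability in the deleted graph, get a walk avoiding `x`. -/
private lemma aux_avoid (hA : G.IsAcyclic) {x y v : W} (hxy : G.Adj x y)
    (h : (G.deleteEdges {s(x, y)}).Reachable v y) :
    ∃ p : (G.deleteEdges {s(x, y)}).Walk v y, x ∉ p.support := by
  classical
  obtain ⟨q⟩ := h
  refine ⟨q.toPath, fun hx => ?_⟩
  exact aux_bridge hA hxy ⟨(q.toPath : (G.deleteEdges {s(x, y)}).Walk v y).dropUntil x hx⟩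

private lemma aux_exists (hA : G.IsAcyclic) (hC : G.Connected) {x v : W} (hxv : x ≠ v) :
    ∃ y, G.Adj x y ∧ (G.deleteEdges {s(x, y)}).Reachable v y := by
  classical
  obtain ⟨q⟩ := hC x v
  obtain ⟨p, hp⟩ : ∃ p : G.Walk x v, p.IsPath := ⟨q.toPath, q.toPath.2⟩
  cases p with
  | nil => exact absurd rfl hxv
  | cons h q =>
    rename_i y
    rw [SimpleGraph.Walk.cons_isPath_iff] at hp
    exact ⟨y, h, (aux_transfer (y := y) q hp.2).symm⟩

private lemma aux_unique (hA : G.IsAcyclic) {x y y' v : W}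
    (hy : G.Adj x y) (hy' : G.Adj x y')
    (h1 : (G.deleteEdges {s(x, y)}).Reachable v y)
    (h2 : (G.deleteEdges {s(x, y')}).Reachable v y') : y = y' := by
  by_contra hne
  obtain ⟨p1, hp1⟩ := aux_avoid hA hy h1
  obtain ⟨p2, hp2⟩ := aux_avoid hA hy' h2
  -- transfer p2 into G.deleteEdges {s(x,y)}
  have h2' : (G.deleteEdges {s(x, y)}).Reachable v y' := by
    refine ⟨p2.transfer _ fun e he => ?_⟩
    rw [SimpleGraph.edgeSet_deleteEdges]
    have hG : e ∈ G.edgeSet := by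
      have h := p2.edges_subset_edgeSet he
      rw [SimpleGraph.edgeSet_deleteEdges] at h
      exact h.1
    refine ⟨hG, ?_⟩
    rintro rfl
    exact hp2 (p2.fst_mem_support_of_mem_edges he)
  have hadj : (G.deleteEdges {s(x, y)}).Adj x y' := by
    rw [SimpleGraph.deleteEdges_adj]
    refine ⟨hy', ?_⟩
    simp only [Set.mem_singleton_iff, Sym2.congr_right]
    exact fun h => hne h.symm
  exact aux_bridge hA hy ((hadj.reachable.trans h2'.symm).trans ⟨p1⟩)

private lemma aux_side_walk {x y : W} (hxy : G.Adj x y) :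
    ∀ {v : W}, G.Walk v x →
      ((G.deleteEdges {s(x, y)}).Reachable v x ∨ (G.deleteEdges {s(x, y)}).Reachable v y)
  | _, SimpleGraph.Walk.nil => Or.inl (SimpleGraph.Reachable.refl _)
  | v, SimpleGraph.Walk.cons (v := b) h q => by
      have ih := aux_side_walk hxy q
      by_cases he : s(v, b) = s(x, y)
      · rw [Sym2.eq_iff] at he
        rcases he with ⟨rfl, rfl⟩ | ⟨rfl, rfl⟩
        · exact Or.inl (SimpleGraph.Reachable.refl _)
        · exact Or.inr (SimpleGraph.Reachable.refl _)
      · have hadj : (G.deleteEdges {s(x, y)}).Adj v b := by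
          rw [SimpleGraph.deleteEdges_adj]
          exact ⟨h, he⟩
        rcases ih with h' | h'
        · exact Or.inl (hadj.reachable.trans h')
        · exact Or.inr (hadj.reachable.trans h')

private lemma aux_side (hC : G.Connected) {x y : W} (hxy : G.Adj x y) (v : W) :
    (G.deleteEdges {s(x, y)}).Reachable v x ∨ (G.deleteEdges {s(x, y)}).Reachable v y := by
  obtain ⟨p⟩ := hC v x
  exact aux_side_walk hxy p

private lemma aux_not_both (hA : G.IsAcyclic) {x y : W} (hxy : G.Adj x y) (v : W)
    (h1 : (G.deleteEdges {s(x, y)}).Reachable v x)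
    (h2 : (G.deleteEdges {s(x, y)}).Reachable v y) : False :=
  aux_bridge hA hxy (h1.symm.trans h2)

/-- Sum over the two sides of a deleted edge. -/
private lemma aux_sum_two [Fintype W] (ht : G.IsTree) {x y : W} (hxy : G.Adj x y) (w : W → ℝ)
    [∀ v z : W, Decidable ((G.deleteEdges {s(x, y)}).Reachable v z)] :
    (∑ v, if (G.deleteEdges {s(x, y)}).Reachable v x then w v else 0)
      + (∑ v, if (G.deleteEdges {s(x, y)}).Reachable v y then w v else 0) = ∑ v, w v := by
  classical
  rw [← Finset.sum_add_distrib]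
  refine Finset.sum_congr rfl fun v _ => ?_
  rcases aux_side ht.isConnected hxy v with h | h
  · rw [if_pos h, if_neg (fun h' => aux_not_both ht.IsAcyclic hxy v h h'), add_zero]
  · rw [if_neg (fun h' => aux_not_both ht.IsAcyclic hxy v h' h), if_pos h, zero_add]

/-- Sum over all branches at a vertex. -/
private lemma aux_sum_nbhd [Fintype W] (ht : G.IsTree) (x : W) (w : W → ℝ)
    [DecidablePred (G.Adj x)]
    [∀ y v : W, Decidable ((G.deleteEdges {s(x, y)}).Reachable v y)] :
    ∑ y ∈ Finset.univ.filter (fun y => G.Adj x y),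
        (∑ v, if (G.deleteEdges {s(x, y)}).Reachable v y then w v else 0)
      = (∑ v, w v) - w x := by
  classical
  rw [Finset.sum_comm]
  have key : ∀ v : W, (∑ y ∈ Finset.univ.filter (fun y => G.Adj x y),
      if (G.deleteEdges {s(x, y)}).Reachable v y then w v else 0)
      = if v = x then 0 else w v := by
    intro v
    by_cases hv : v = x
    · subst hv
      rw [if_pos rfl]
      refine Finset.sum_eq_zero fun y hy => ?_
      rw [Finset.mem_filter] at hy
      exact if_neg (aux_bridge ht.IsAcyclic hy.2)
    · rw [if_neg hv]
      obtain ⟨y₀, hy₀, hr₀⟩ := aux_exists ht.IsAcyclic ht.isConnected (Ne.symm hv)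
      rw [Finset.sum_eq_single_of_mem y₀ (Finset.mem_filter.mpr ⟨Finset.mem_univ _, hy₀⟩)]
      · exact if_pos hr₀
      · intro b hb hbne
        rw [Finset.mem_filter] at hb
        refine if_neg fun hr => hbne ?_
        exact aux_unique ht.IsAcyclic hb.2 hy₀ hr hr₀
  rw [Finset.sum_congr rfl fun v _ => key v]
  have : ∀ v : W, (if v = x then 0 else w v) = w v - (if v = x then w v else 0) := by
    intro v; by_cases hv : v = x <;> simp [hv]
  rw [Finset.sum_congr rfl fun v _ => this v, Finset.sum_sub_distrib,
    Finset.sum_ite_eq' Finset.univ x w, if_pos (Finset.mem_univ x)]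

end Aux

open Classical in
/-- Construction of feasible counting numbers on a factor tree: given nonnegative `c_j` and
positive `c_α` summing to one, the edge numbers obtained by summing the `c`-values over the
component containing `j` after deleting the edge `(j, α)` are nonnegative and satisfy the
counting-number equations. -/
theorem counting_numbers_construction {V F : Type*} [Fintype V] [Fintype F]
    (G : SimpleGraph (V ⊕ F))
    (hbip : ∀ v w, G.Adj v w →
      (∃ a b, v = Sum.inl a ∧ w = Sum.inr b) ∨ (∃ a b, v = Sum.inr b ∧ w = Sum.inl a))
    (htree : G.IsTree)
    (c : V → ℝ) (cF : F → ℝ) (hc : ∀ j, 0 ≤ c j) (hcF : ∀ α, 0 < cF α)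
    (hsum : (∑ j, c j) + ∑ α, cF α = 1) :
    let w : V ⊕ F → ℝ := Sum.elim c cF
    let ce : V → F → ℝ := fun j α =>
      ∑ v, if (G.deleteEdges {s(Sum.inl j, Sum.inr α)}).Reachable v (Sum.inl j)
        then w v else 0
    (∀ j α, G.Adj (Sum.inl j) (Sum.inr α) → 0 ≤ ce j α) ∧
      (∀ j : V,
        c j - ∑ α ∈ Finset.univ.filter (fun α : F => G.Adj (Sum.inl j) (Sum.inr α)), ce j α
          = 1 - ((Finset.univ.filter (fun α : F => G.Adj (Sum.inl j) (Sum.inr α))).card : ℝ)) ∧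
      (∀ α : F,
        cF α + ∑ j ∈ Finset.univ.filter (fun j : V => G.Adj (Sum.inl j) (Sum.inr α)), ce j α
          = 1) := by
  intro w ce
  have hwnn : ∀ v, 0 ≤ w v := by
    rintro (j | α)
    · exact hc j
    · exact (hcF α).le
  have htotal : ∑ v : V ⊕ F, w v = 1 := by
    rw [Fintype.sum_sum_type]; exact hsum
  refine ⟨?_, ?_, ?_⟩
  · intro j α _
    refine Finset.sum_nonneg fun v _ => ?_
    by_cases h : (G.deleteEdges {s(Sum.inl j, Sum.inr α)}).Reachable v (Sum.inl j)
    · rw [if_pos h]; exact hwnn v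
    · rw [if_neg h]
  · -- variable equations
    intro j
    set N := Finset.univ.filter (fun α : F => G.Adj (Sum.inl j) (Sum.inr α)) with hN
    have hpair : ∀ α ∈ N, ce j α =
        1 - ∑ v, (if (G.deleteEdges {s(Sum.inl j, Sum.inr α)}).Reachable v (Sum.inr α)
          then w v else 0) := by
      intro α hα
      rw [Finset.mem_filter] at hα
      have h2 := aux_sum_two htree hα.2 w
      rw [htotal] at h2
      have hce : ce j α = ∑ v, if (G.deleteEdges
          {s(Sum.inl j, Sum.inr α)}).Reachable v (Sum.inl j) then w v else 0 := rfl
      rw [hce]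
      linarith [h2]
    have hnb := aux_sum_nbhd htree (Sum.inl j) w
    rw [htotal] at hnb
    -- convert the V⊕F-indexed neighbor sum into an F-indexed sum
    have hconv : ∑ y ∈ Finset.univ.filter (fun y => G.Adj (Sum.inl j) y),
        (∑ v, if (G.deleteEdges {s(Sum.inl j, y)}).Reachable v y then w v else 0)
        = ∑ α ∈ N, ∑ v,
            (if (G.deleteEdges {s(Sum.inl j, Sum.inr α)}).Reachable v (Sum.inr α)
              then w v else 0) := by
      rw [Finset.sum_filter, Finset.sum_filter, Fintype.sum_sum_type]
      have hzero : ∀ i : V, ¬ G.Adj (Sum.inl j) (Sum.inl i) := by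
        intro i hadj
        rcases hbip _ _ hadj with ⟨a, b, _, hb⟩ | ⟨a, b, hb, _⟩ <;> simp_all
      simp only [hzero, if_false, Finset.sum_const_zero, zero_add]
    rw [hconv] at hnb
    rw [Finset.sum_congr rfl hpair, Finset.sum_sub_distrib, Finset.sum_const, hnb]
    have hwj : w (Sum.inl j) = c j := rfl
    rw [hwj]
    push_cast
    ring
  · -- factor equations
    intro α
    have hnb := aux_sum_nbhd htree (Sum.inr α) w
    rw [htotal] at hnb
    have hconv : ∑ y ∈ Finset.univ.filter (fun y => G.Adj (Sum.inr α) y),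
        (∑ v, if (G.deleteEdges {s(Sum.inr α, y)}).Reachable v y then w v else 0)
        = ∑ j ∈ Finset.univ.filter (fun j : V => G.Adj (Sum.inl j) (Sum.inr α)), ce j α := by
      rw [Finset.sum_filter, Finset.sum_filter, Fintype.sum_sum_type]
      have hzero : ∀ β : F, ¬ G.Adj (Sum.inr α) (Sum.inr β) := by
        intro β hadj
        rcases hbip _ _ hadj with ⟨a, b, ha, _⟩ | ⟨a, b, _, hb⟩ <;> simp_all
      simp only [hzero, if_false, Finset.sum_const_zero, add_zero]
      refine Finset.sum_congr rfl fun i _ => ?_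
      rw [G.adj_comm]
      refine if_congr Iff.rfl ?_ rfl
      have hce : ce i α = ∑ v, if (G.deleteEdges
          {s(Sum.inl i, Sum.inr α)}).Reachable v (Sum.inl i) then w v else 0 := rfl
      rw [hce, Sym2.eq_swap]
    rw [hconv] at hnb
    simp only [w, Sum.elim_inr] at hnb
    linarith [hnb]
end

section
/- For a joint probability tensor B on a product of J finite sets that factorizes as B(x) = (1/Z)·∏_{α∈F} B_α(x_α)·∏_{j∈V} B_j(x_j)^{1−N_j} according to a factor tree, with B_j, B_α its node and factor marginals (all positive), the entropy of B equals the Bethe entropy: H(B) = ∑_{α∈F} H(B_α) − ∑_{j∈V} (N_j − 1)·H(B_j). -/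
open Classical in
private lemma group_sum' {ι κ : Type*} [Fintype ι] [Fintype κ]
    (B : ι → ℝ) (f : ι → κ) (g : κ → ℝ) :
    ∑ x, B x * g (f x) = ∑ y, (∑ x, if f x = y then B x else 0) * g y := by
  simp_rw [Finset.sum_mul, ite_mul, zero_mul]
  rw [Finset.sum_comm]
  refine Finset.sum_congr rfl fun x _ => ?_
  simp

open Classical in
/-- For a strictly positive joint distribution factorizing according to a factor tree in
terms of its own marginals, the entropy equals the Bethe entropy. -/
theorem entropy_eq_bethe_entropy_of_tree_factorization
    {V F : Type*} [Fintype V] [Fintype F]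
    (X : V → Type*) [∀ j, Fintype (X j)]
    (M : F → Finset V)
    (B : ((j : V) → X j) → ℝ) (hBpos : ∀ x, 0 < B x) (hBsum : ∑ x, B x = 1) :
    let Bj : (j : V) → X j → ℝ := fun j v => ∑ x, if x j = v then B x else 0
    let Bα : (α : F) → (((j : M α) → X j.1) → ℝ) := fun α y =>
      ∑ x, if (∀ j : M α, x j.1 = y j) then B x else 0
    let Nj : V → ℕ := fun j => (Finset.univ.filter (fun α : F => j ∈ M α)).card
    (∀ x, B x = (∏ α, Bα α (fun j => x j.1))
        * ∏ j, (Bj j (x j)) ^ ((1 : ℤ) - (Nj j : ℤ))) →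
    (-∑ x, B x * Real.log (B x)) =
      (∑ α, -∑ y, Bα α y * Real.log (Bα α y)) -
        ∑ j, ((Nj j : ℝ) - 1) * (-∑ v, Bj j v * Real.log (Bj j v)) := by
  intro Bj Bα Nj hfac
  have hne : Nonempty ((j : V) → X j) := by
    by_contra h
    rw [not_nonempty_iff] at h
    rw [Finset.univ_eq_empty, Finset.sum_empty] at hBsum
    exact one_ne_zero hBsum.symm
  obtain ⟨x₀⟩ := hne
  have hnn : ∀ (p : Prop) [Decidable p] (x : (j : V) → X j),
      0 ≤ if p then B x else 0 := by
    intro p _ x; split_ifs; exacts [(hBpos x).le, le_rfl]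
  -- positivity of marginals
  have hBjpos : ∀ j v, 0 < Bj j v := by
    intro j v
    refine Finset.sum_pos' (fun x _ => hnn _ x) ⟨Function.update x₀ j v,
      Finset.mem_univ _, ?_⟩
    simp [Function.update_self, hBpos]
  have hBαpos : ∀ α y, 0 < Bα α y := by
    intro α y
    refine Finset.sum_pos' (fun x _ => hnn _ x)
      ⟨fun i => if h : i ∈ M α then y ⟨i, h⟩ else x₀ i, Finset.mem_univ _, ?_⟩
    have h1 : ∀ j : M α, (if h : j.1 ∈ M α then y ⟨j.1, h⟩ else x₀ j.1) = y j := by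
      intro j; rw [dif_pos j.2]
    simp [h1, hBpos]
  -- log expansion
  have hlog : ∀ x, Real.log (B x) =
      (∑ α, Real.log (Bα α (fun j => x j.1))) +
      ∑ j, ((1 : ℝ) - (Nj j : ℝ)) * Real.log (Bj j (x j)) := by
    intro x
    rw [hfac x, Real.log_mul, Real.log_prod, Real.log_prod]
    · congr 1
      refine Finset.sum_congr rfl fun j _ => ?_
      rw [Real.log_zpow]
      push_cast
      ring
    · intro j _; exact (zpow_pos (hBjpos j (x j)) _).ne'
    · intro α _; exact (hBαpos α _).ne'
    · exact (Finset.prod_pos fun α _ => hBαpos α _).ne'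
    · exact (Finset.prod_pos fun j _ => zpow_pos (hBjpos j (x j)) _).ne'
  -- marginal grouping
  have hgα : ∀ α : F, ∑ x, B x * Real.log (Bα α (fun j => x j.1)) =
      ∑ y, Bα α y * Real.log (Bα α y) := by
    intro α
    rw [group_sum' B (fun x (j : M α) => x j.1) (fun y => Real.log (Bα α y))]
    refine Finset.sum_congr rfl fun y _ => ?_
    congr 1
    show _ = Bα α y
    simp only [Bα, funext_iff]
  have hgj : ∀ j : V, ∑ x, B x * Real.log (Bj j (x j)) =
      ∑ v, Bj j v * Real.log (Bj j v) := by
    intro j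
    rw [group_sum' B (fun x => x j) (fun v => Real.log (Bj j v))]
  calc -∑ x, B x * Real.log (B x)
      = -∑ x, ((∑ α, B x * Real.log (Bα α (fun j => x j.1))) +
          ∑ j, ((1 : ℝ) - (Nj j : ℝ)) * (B x * Real.log (Bj j (x j)))) := by
        refine congrArg _ (Finset.sum_congr rfl fun x _ => ?_)
        rw [hlog x, mul_add, Finset.mul_sum, Finset.mul_sum]
        congr 1
        exact Finset.sum_congr rfl fun j _ => by ring
    _ = -((∑ α, ∑ x, B x * Real.log (Bα α (fun j => x j.1))) +
          ∑ j, ((1 : ℝ) - (Nj j : ℝ)) * ∑ x, B x * Real.log (Bj j (x j))) := by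
        have hA : (∑ x, ∑ α, B x * Real.log (Bα α (fun j => x j.1))) =
            ∑ α, ∑ x, B x * Real.log (Bα α (fun j => x j.1)) := Finset.sum_comm
        have hB : (∑ x, ∑ j, ((1 : ℝ) - (Nj j : ℝ)) * (B x * Real.log (Bj j (x j)))) =
            ∑ j, ((1 : ℝ) - (Nj j : ℝ)) * ∑ x, B x * Real.log (Bj j (x j)) := by
          rw [Finset.sum_comm]
          exact Finset.sum_congr rfl fun j _ => (Finset.mul_sum _ _ _).symm
        rw [Finset.sum_add_distrib, hA, hB]
    _ = _ := by
        simp_rw [hgα, hgj]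
        have h2 : ∑ j, ((1 : ℝ) - (Nj j : ℝ)) * ∑ v, Bj j v * Real.log (Bj j v) =
            ∑ j, ((Nj j : ℝ) - 1) * (-∑ v, Bj j v * Real.log (Bj j v)) :=
          Finset.sum_congr rfl fun j _ => by ring
        rw [h2, Finset.sum_neg_distrib]
        ring
end

section
/- Let μ_1, μ_2 be probability vectors with positive entries and let B be a positive matrix with row sums μ_1 and column sums μ_2. If B(i_1,i_2) = K(i_1,i_2)·u_1(i_1)·u_2(i_2) and B'(i_1,i_2) = K(i_1,i_2)·v_1(i_1)·v_2(i_2) for positive vectors u_1,u_2,v_1,v_2 and a positive matrix K, and both B and B' have row sums μ_1 and column sums μ_2, then B = B', and there exists t > 0 with v_1 = t·u_1 and v_2 = (1/t)·u_2. -/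
/-- Uniqueness in the Sinkhorn scaling theorem: two positive diagonal scalings of the same
positive matrix with identical row and column sums coincide, and the scaling vectors agree
up to a positive constant. -/
theorem sinkhorn_scaling_uniqueness {d₁ d₂ : ℕ}
    (K : Matrix (Fin d₁) (Fin d₂) ℝ) (hK : ∀ i j, 0 < K i j)
    (u₁ v₁ : Fin d₁ → ℝ) (u₂ v₂ : Fin d₂ → ℝ)
    (hu₁ : ∀ i, 0 < u₁ i) (hu₂ : ∀ j, 0 < u₂ j)
    (hv₁ : ∀ i, 0 < v₁ i) (hv₂ : ∀ j, 0 < v₂ j)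
    (μ₁ : Fin d₁ → ℝ) (μ₂ : Fin d₂ → ℝ)
    (hμ₁ : ∀ i, 0 < μ₁ i) (hμ₂ : ∀ j, 0 < μ₂ j)
    (hμ₁s : ∑ i, μ₁ i = 1) (hμ₂s : ∑ j, μ₂ j = 1)
    (B B' : Matrix (Fin d₁) (Fin d₂) ℝ)
    (hBpos : ∀ i j, 0 < B i j)
    (hB : ∀ i j, B i j = K i j * u₁ i * u₂ j)
    (hB' : ∀ i j, B' i j = K i j * v₁ i * v₂ j)
    (hrow : ∀ i, ∑ j, B i j = μ₁ i) (hcol : ∀ j, ∑ i, B i j = μ₂ j)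
    (hrow' : ∀ i, ∑ j, B' i j = μ₁ i) (hcol' : ∀ j, ∑ i, B' i j = μ₂ j) :
    B = B' ∧ ∃ t : ℝ, 0 < t ∧ (∀ i, v₁ i = t * u₁ i) ∧ (∀ j, v₂ j = u₂ j / t) := by
  have hd₁ : 0 < d₁ := by
    rcases Nat.eq_zero_or_pos d₁ with h | h
    · subst h; simp at hμ₁s
    · exact h
  have hd₂ : 0 < d₂ := by
    rcases Nat.eq_zero_or_pos d₂ with h | h
    · subst h; simp at hμ₂s
    · exact h
  haveI : Nonempty (Fin d₁) := ⟨⟨0, hd₁⟩⟩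
  haveI : Nonempty (Fin d₂) := ⟨⟨0, hd₂⟩⟩
  -- row and column equations
  have hroweq : ∀ i, ∑ j, K i j * v₁ i * v₂ j = ∑ j, K i j * u₁ i * u₂ j := by
    intro i
    have h1 := hrow i; have h2 := hrow' i
    simp_rw [hB] at h1; simp_rw [hB'] at h2
    exact h2.trans h1.symm
  have hcoleq : ∀ j, ∑ i, K i j * v₁ i * v₂ j = ∑ i, K i j * u₁ i * u₂ j := by
    intro j
    have h1 := hcol j; have h2 := hcol' j
    simp_rw [hB] at h1; simp_rw [hB'] at h2
    exact h2.trans h1.symm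
  -- maximizer of ratio
  obtain ⟨i₀, -, hi₀⟩ := Finset.exists_max_image Finset.univ (fun i => v₁ i / u₁ i)
    Finset.univ_nonempty
  set t := v₁ i₀ / u₁ i₀ with ht
  have htpos : 0 < t := div_pos (hv₁ i₀) (hu₁ i₀)
  have hle : ∀ i, v₁ i ≤ t * u₁ i := by
    intro i
    have h := hi₀ i (Finset.mem_univ i)
    rw [div_le_iff₀ (hu₁ i)] at h
    linarith [h]
  have hvi₀ : v₁ i₀ = t * u₁ i₀ := by
    rw [ht, div_mul_cancel₀ _ (hu₁ i₀).ne']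
  -- step 2: u₂ j ≤ t * v₂ j
  have hv₂ge : ∀ j, u₂ j ≤ t * v₂ j := by
    intro j
    have hS : 0 < ∑ i, K i j * u₁ i :=
      Finset.sum_pos (fun i _ => mul_pos (hK i j) (hu₁ i)) Finset.univ_nonempty
    have h1 : (∑ i, K i j * v₁ i) * v₂ j = (∑ i, K i j * u₁ i) * u₂ j := by
      rw [Finset.sum_mul, Finset.sum_mul]
      simpa [mul_assoc, mul_comm, mul_left_comm] using hcoleq j
    have h2 : ∑ i, K i j * v₁ i ≤ t * ∑ i, K i j * u₁ i := by
      rw [Finset.mul_sum]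
      refine Finset.sum_le_sum fun i _ => ?_
      have := hle i
      nlinarith [hK i j]
    nlinarith [hv₂ j, (mul_le_mul_of_nonneg_right h2 (hv₂ j).le)]
  -- step 3: equality forced at i₀, giving v₂ j = u₂ j / t
  have hv₂eq : ∀ j, v₂ j = u₂ j / t := by
    have hsum : ∑ j, K i₀ j * u₂ j = ∑ j, K i₀ j * (t * v₂ j) := by
      have h := hroweq i₀
      rw [hvi₀] at h
      have h' : (∑ j, K i₀ j * (t * v₂ j)) * u₁ i₀ = (∑ j, K i₀ j * u₂ j) * u₁ i₀ := by
        calc (∑ j, K i₀ j * (t * v₂ j)) * u₁ i₀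
            = ∑ j, K i₀ j * (t * u₁ i₀) * v₂ j := by
              rw [Finset.sum_mul]; congr 1; ext j; ring
          _ = ∑ j, K i₀ j * u₁ i₀ * u₂ j := h
          _ = (∑ j, K i₀ j * u₂ j) * u₁ i₀ := by
              rw [Finset.sum_mul]; congr 1; ext j; ring
      have := mul_right_cancel₀ (hu₁ i₀).ne' h'
      exact this.symm
    have hterm : ∀ j ∈ Finset.univ, K i₀ j * u₂ j ≤ K i₀ j * (t * v₂ j) := fun j _ =>
      mul_le_mul_of_nonneg_left (hv₂ge j) (hK i₀ j).le
    have hall := (Finset.sum_eq_sum_iff_of_le hterm).mp hsum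
    intro j
    have hj := hall j (Finset.mem_univ j)
    have : u₂ j = t * v₂ j := mul_left_cancel₀ (hK i₀ j).ne' hj
    field_simp [this]
    rw [this]; ring
  -- step 4: v₁ i = t * u₁ i for all i
  have hv₁eq : ∀ i, v₁ i = t * u₁ i := by
    intro i
    have hS : 0 < ∑ j, K i j * u₂ j :=
      Finset.sum_pos (fun j _ => mul_pos (hK i j) (hu₂ j)) Finset.univ_nonempty
    have h := hroweq i
    have h1 : v₁ i * ((∑ j, K i j * u₂ j) / t) = u₁ i * ∑ j, K i j * u₂ j := by
      calc v₁ i * ((∑ j, K i j * u₂ j) / t)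
          = ∑ j, K i j * v₁ i * (u₂ j / t) := by
            rw [Finset.sum_div, Finset.mul_sum]; congr 1; ext j; ring
        _ = ∑ j, K i j * v₁ i * v₂ j := by
            congr 1; ext j; rw [hv₂eq j]
        _ = ∑ j, K i j * u₁ i * u₂ j := h
        _ = u₁ i * ∑ j, K i j * u₂ j := by
            rw [Finset.mul_sum]; congr 1; ext j; ring
    have : v₁ i / t = u₁ i := by
      field_simp at h1 ⊢
      nlinarith [hS]
    field_simp at this
    linarith [this]
  refine ⟨?_, t, htpos, hv₁eq, hv₂eq⟩
  ext i j
  rw [hB, hB', hv₁eq i, hv₂eq j]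
  field_simp
end
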